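/- The presented group G = ⟨γ₁, γ₂, γ₃, γ₄ ∣ [γ_i, γ_j] for all 1 ≤ i < j ≤ 4; γ₁⁻²·γ₂γ₃γ₄; γ₂⁻²·γ₁γ₃γ₄; γ₃⁻²·γ₁γ₂γ₄; γ₄⁻²·γ₁γ₂γ₃⟩ is isomorphic to (ℤ/3ℤ)³. -/

import Mathlib

section Stmt9Aux

variable {H : Type*} [CommGroup H] {x0 x1 x2 x3 : H}

private lemma stmt9_sq_eq_inv {x : H} (h : x ^ 3 = 1) : x ^ 2 = x⁻¹ :=
  eq_inv_of_mul_eq_one_left (by rw [← pow_succ]; exact h)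

private lemma stmt9_inv_sq {x : H} (h : x ^ 3 = 1) : (x⁻¹) ^ 2 = x := by
  rw [inv_pow, stmt9_sq_eq_inv h, inv_inv]

private lemma stmt9_inv3 {x : H} (h : x ^ 3 = 1) : x⁻¹ * x⁻¹ * x⁻¹ = 1 := by
  have e : x⁻¹ * x⁻¹ * x⁻¹ = (x ^ 3)⁻¹ := by group
  rw [e, h, inv_one]

private lemma stmt9_c0 (h1 : x1 ^ 2 = x0 * x2 * x3) (h2 : x2 ^ 2 = x0 * x1 * x3)
    (h3 : x3 ^ 2 = x0 * x1 * x2) : x0 ^ 3 = 1 := by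
  have key : x1 ^ 2 * x2 ^ 2 * x3 ^ 2 = x0 ^ 3 * (x1 ^ 2 * x2 ^ 2 * x3 ^ 2) := by
    conv_lhs => rw [h1, h2, h3]
    simp only [pow_succ, pow_zero, one_mul]
    simp only [mul_comm, mul_left_comm, mul_assoc]
  exact right_eq_mul.mp key

private lemma stmt9_c1 (h0 : x0 ^ 2 = x1 * x2 * x3) (h1 : x1 ^ 2 = x0 * x2 * x3)
    (hc0 : x0 ^ 3 = 1) : x1 ^ 3 = 1 := by
  have : x1 ^ 3 = x0 * (x1 * x2 * x3) := by
    rw [pow_succ, h1]; simp only [mul_comm, mul_left_comm, mul_assoc]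
  rw [this, ← h0, ← pow_succ']
  exact hc0

private lemma stmt9_c2 (h0 : x0 ^ 2 = x1 * x2 * x3) (h2 : x2 ^ 2 = x0 * x1 * x3)
    (hc0 : x0 ^ 3 = 1) : x2 ^ 3 = 1 := by
  have : x2 ^ 3 = x0 * (x1 * x2 * x3) := by
    rw [pow_succ, h2]; simp only [mul_comm, mul_left_comm, mul_assoc]
  rw [this, ← h0, ← pow_succ']
  exact hc0

private lemma stmt9_c3 (h0 : x0 ^ 2 = x1 * x2 * x3) (h3 : x3 ^ 2 = x0 * x1 * x2)
    (hc0 : x0 ^ 3 = 1) : x3 ^ 3 = 1 := by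
  have : x3 ^ 3 = x0 * (x1 * x2 * x3) := by
    rw [pow_succ, h3]; simp only [mul_comm, mul_left_comm, mul_assoc]
  rw [this, ← h0, ← pow_succ']
  exact hc0

private lemma stmt9_uvw (h0 : x0 ^ 2 = x1 * x2 * x3) (hc0 : x0 ^ 3 = 1) :
    (x1 * x0⁻¹) ^ 2 * (x2 * x0⁻¹) ^ 2 * (x3 * x0⁻¹) ^ 2 = x0 := by
  have e : (x1 * x0⁻¹) * (x2 * x0⁻¹) * (x3 * x0⁻¹) = (x1 * x2 * x3) * (x0⁻¹ * x0⁻¹ * x0⁻¹) := by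
    simp only [mul_comm, mul_left_comm, mul_assoc]
  have e2 : (x1 * x0⁻¹) * (x2 * x0⁻¹) * (x3 * x0⁻¹) = x0⁻¹ := by
    rw [e, ← h0]; group
  rw [← mul_pow, ← mul_pow, e2, stmt9_inv_sq hc0]

private lemma stmt9_vw (h0 : x0 ^ 2 = x1 * x2 * x3) (h1 : x1 ^ 2 = x0 * x2 * x3)
    (hc0 : x0 ^ 3 = 1) : (x2 * x0⁻¹) ^ 2 * (x3 * x0⁻¹) ^ 2 = x1 := by
  have e : (x2 * x0⁻¹) * (x3 * x0⁻¹) = (x2 * x3) * (x0⁻¹ * x0⁻¹) := by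
    simp only [mul_comm, mul_left_comm, mul_assoc]
  have e2 : x2 * x3 = x1⁻¹ * (x1 * x2 * x3) := by group
  have e3 : (x2 * x0⁻¹) * (x3 * x0⁻¹) = x1⁻¹ := by
    rw [e, e2, ← h0]; group
  rw [← mul_pow, e3, stmt9_inv_sq (stmt9_c1 h0 h1 hc0)]

private lemma stmt9_uw (h2 : x2 ^ 2 = x0 * x1 * x3) (hc0 : x0 ^ 3 = 1) (hc2 : x2 ^ 3 = 1) :
    (x1 * x0⁻¹) ^ 2 * (x3 * x0⁻¹) ^ 2 = x2 := by
  have e : (x1 * x0⁻¹) * (x3 * x0⁻¹) = (x1 * x3) * (x0⁻¹ * x0⁻¹) := by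
    simp only [mul_comm, mul_left_comm, mul_assoc]
  have e2 : x1 * x3 = x0⁻¹ * x2 ^ 2 := by rw [h2]; group
  have e3 : (x1 * x0⁻¹) * (x3 * x0⁻¹) = x2⁻¹ := by
    rw [e, e2]
    have e4 : x0⁻¹ * x2 ^ 2 * (x0⁻¹ * x0⁻¹) = x0⁻¹ * x0⁻¹ * x0⁻¹ * x2 ^ 2 := by
      simp only [mul_comm, mul_left_comm, mul_assoc]
    rw [e4, stmt9_inv3 hc0, one_mul, stmt9_sq_eq_inv hc2]
  rw [← mul_pow, e3, stmt9_inv_sq hc2]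

private lemma stmt9_uv (h3 : x3 ^ 2 = x0 * x1 * x2) (hc0 : x0 ^ 3 = 1) (hc3 : x3 ^ 3 = 1) :
    (x1 * x0⁻¹) ^ 2 * (x2 * x0⁻¹) ^ 2 = x3 := by
  have e : (x1 * x0⁻¹) * (x2 * x0⁻¹) = (x1 * x2) * (x0⁻¹ * x0⁻¹) := by
    simp only [mul_comm, mul_left_comm, mul_assoc]
  have e2 : x1 * x2 = x0⁻¹ * x3 ^ 2 := by rw [h3]; group
  have e3 : (x1 * x0⁻¹) * (x2 * x0⁻¹) = x3⁻¹ := by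
    rw [e, e2]
    have e4 : x0⁻¹ * x3 ^ 2 * (x0⁻¹ * x0⁻¹) = x0⁻¹ * x0⁻¹ * x0⁻¹ * x3 ^ 2 := by
      simp only [mul_comm, mul_left_comm, mul_assoc]
    rw [e4, stmt9_inv3 hc0, one_mul, stmt9_sq_eq_inv hc3]
  rw [← mul_pow, e3, stmt9_inv_sq hc3]

private lemma stmt9_cu (hc0 : x0 ^ 3 = 1) (hc1 : x1 ^ 3 = 1) : (x1 * x0⁻¹) ^ 3 = 1 := by
  rw [mul_pow, hc1, inv_pow, hc0, inv_one, mul_one]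

private lemma stmt9_mul_mul (p q r p' q' r' : H) :
    (p * p') * (q * q') * (r * r') = (p * q * r) * (p' * q' * r') := by
  simp only [mul_comm, mul_left_comm, mul_assoc]

end Stmt9Aux


/-- The presented group
`⟨γ₁, γ₂, γ₃, γ₄ ∣ [γᵢ, γⱼ] (i < j), γ₁⁻²γ₂γ₃γ₄, γ₂⁻²γ₁γ₃γ₄, γ₃⁻²γ₁γ₂γ₄, γ₄⁻²γ₁γ₂γ₃⟩`
is isomorphic to `(ℤ/3ℤ)³`. -/
theorem stmt_9 :
    let γ : Fin 4 → FreeGroup (Fin 4) := FreeGroup.of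
    let rels : Set (FreeGroup (Fin 4)) :=
      {w | ∃ i j : Fin 4, i < j ∧ w = γ i * γ j * (γ i)⁻¹ * (γ j)⁻¹} ∪
        {γ 0 ^ (-2 : ℤ) * γ 1 * γ 2 * γ 3,
          γ 1 ^ (-2 : ℤ) * γ 0 * γ 2 * γ 3,
          γ 2 ^ (-2 : ℤ) * γ 0 * γ 1 * γ 3,
          γ 3 ^ (-2 : ℤ) * γ 0 * γ 1 * γ 2}
    Nonempty (PresentedGroup rels ≃* Multiplicative (ZMod 3 × ZMod 3 × ZMod 3)) := by
  intro γ rels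
  set a : Fin 4 → PresentedGroup rels := PresentedGroup.of with ha
  have hrel : ∀ r ∈ rels, PresentedGroup.mk rels r = 1 := fun r hr =>
    (QuotientGroup.eq_one_iff r).mpr (Subgroup.subset_normalClosure hr)
  have hcomm0 : ∀ i j : Fin 4, i < j → a i * a j = a j * a i := by
    intro i j hij
    have h : a i * a j * (a i)⁻¹ * (a j)⁻¹ = 1 := by
      have h := hrel _ (Or.inl ⟨i, j, hij, rfl⟩)
      rw [map_mul, map_mul, map_mul, map_inv, map_inv] at h
      exact h
    calc a i * a j = (a i * a j * (a i)⁻¹ * (a j)⁻¹) * (a j * a i) := by group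
    _ = a j * a i := by rw [h, one_mul]
  have hcomm : ∀ i j : Fin 4, a i * a j = a j * a i := by
    intro i j
    rcases lt_trichotomy i j with h | h | h
    · exact hcomm0 i j h
    · rw [h]
    · exact (hcomm0 j i h).symm
  -- the four power relations
  have hr0 : a 0 ^ 2 = a 1 * a 2 * a 3 := by
    have h : (a 0) ^ (-2 : ℤ) * a 1 * a 2 * a 3 = 1 := by
      have h := hrel _ (Or.inr (Set.mem_insert _ _))
      rw [map_mul, map_mul, map_mul, map_zpow] at h
      exact h
    calc a 0 ^ 2 = a 0 ^ 2 * ((a 0) ^ (-2 : ℤ) * a 1 * a 2 * a 3) := by rw [h, mul_one]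
    _ = a 1 * a 2 * a 3 := by group
  have hr1 : a 1 ^ 2 = a 0 * a 2 * a 3 := by
    have h : (a 1) ^ (-2 : ℤ) * a 0 * a 2 * a 3 = 1 := by
      have h := hrel _ (Or.inr (Set.mem_insert_of_mem _ (Set.mem_insert _ _)))
      rw [map_mul, map_mul, map_mul, map_zpow] at h
      exact h
    calc a 1 ^ 2 = a 1 ^ 2 * ((a 1) ^ (-2 : ℤ) * a 0 * a 2 * a 3) := by rw [h, mul_one]
    _ = a 0 * a 2 * a 3 := by group
  have hr2 : a 2 ^ 2 = a 0 * a 1 * a 3 := by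
    have h : (a 2) ^ (-2 : ℤ) * a 0 * a 1 * a 3 = 1 := by
      have h := hrel _ (Or.inr (Set.mem_insert_of_mem _ (Set.mem_insert_of_mem _
        (Set.mem_insert _ _))))
      rw [map_mul, map_mul, map_mul, map_zpow] at h
      exact h
    calc a 2 ^ 2 = a 2 ^ 2 * ((a 2) ^ (-2 : ℤ) * a 0 * a 1 * a 3) := by rw [h, mul_one]
    _ = a 0 * a 1 * a 3 := by group
  have hr3 : a 3 ^ 2 = a 0 * a 1 * a 2 := by
    have h : (a 3) ^ (-2 : ℤ) * a 0 * a 1 * a 2 = 1 := by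
      have h := hrel _ (Or.inr (Set.mem_insert_of_mem _ (Set.mem_insert_of_mem _
        (Set.mem_insert_of_mem _ rfl))))
      rw [map_mul, map_mul, map_mul, map_zpow] at h
      exact h
    calc a 3 ^ 2 = a 3 ^ 2 * ((a 3) ^ (-2 : ℤ) * a 0 * a 1 * a 2) := by rw [h, mul_one]
    _ = a 0 * a 1 * a 2 := by group
  -- commutativity of the whole group
  have hcent : ∀ x : PresentedGroup rels, x ∈ Subgroup.centralizer (Set.range a) := by
    intro x
    refine PresentedGroup.generated_by rels _ (fun j => Subgroup.mem_centralizer_iff.mpr ?_) x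
    rintro y ⟨i, rfl⟩
    exact hcomm i j
  have hmulcomm : ∀ x y : PresentedGroup rels, x * y = y * x := by
    intro x y
    have hy := PresentedGroup.generated_by rels (Subgroup.centralizer {x})
      (fun j => Subgroup.mem_centralizer_iff.mpr ?_) y
    · exact Subgroup.mem_centralizer_iff.mp hy x rfl
    · rintro g hg
      rw [Set.mem_singleton_iff] at hg
      subst hg
      exact (Subgroup.mem_centralizer_iff.mp (hcent g) (a j) ⟨j, rfl⟩).symm
  letI : CommGroup (PresentedGroup rels) :=
    { (inferInstance : Group (PresentedGroup rels)) with mul_comm := hmulcomm }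
  have hc0 : a 0 ^ 3 = 1 := stmt9_c0 hr1 hr2 hr3
  have hc1 : a 1 ^ 3 = 1 := stmt9_c1 hr0 hr1 hc0
  have hc2 : a 2 ^ 3 = 1 := stmt9_c2 hr0 hr2 hc0
  have hc3 : a 3 ^ 3 = 1 := stmt9_c3 hr0 hr3 hc0
  set u : PresentedGroup rels := a 1 * (a 0)⁻¹ with hu
  set v : PresentedGroup rels := a 2 * (a 0)⁻¹ with hv
  set w : PresentedGroup rels := a 3 * (a 0)⁻¹ with hw
  have hu3 : u ^ 3 = 1 := stmt9_cu hc0 hc1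
  have hv3 : v ^ 3 = 1 := stmt9_cu hc0 hc2
  have hw3 : w ^ 3 = 1 := stmt9_cu hc0 hc3
  let fM : Fin 4 → Multiplicative (ZMod 3 × ZMod 3 × ZMod 3) :=
    ![Multiplicative.ofAdd (2, 2, 2), Multiplicative.ofAdd (0, 2, 2),
      Multiplicative.ofAdd (2, 0, 2), Multiplicative.ofAdd (2, 2, 0)]
  have hrels : ∀ r ∈ rels, FreeGroup.lift fM r = 1 := by
    rintro r (⟨i, j, hij, rfl⟩ | hr)
    · simp only [show γ = FreeGroup.of from rfl, map_mul, map_inv, FreeGroup.lift_apply_of]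
      rw [mul_comm (fM i) (fM j)]
      group
    · simp only [Set.mem_insert_iff, Set.mem_singleton_iff] at hr
      rcases hr with rfl | rfl | rfl | rfl <;>
        · simp only [show γ = FreeGroup.of from rfl, map_mul, map_zpow, FreeGroup.lift_apply_of]
          decide
  let φ : PresentedGroup rels →* Multiplicative (ZMod 3 × ZMod 3 × ZMod 3) :=
    PresentedGroup.toGroup hrels
  have hpw : ∀ (g : PresentedGroup rels), g ^ 3 = 1 → ∀ s t : ZMod 3,
      g ^ (s + t).val = g ^ s.val * g ^ t.val := by
    intro g hg s t
    rw [ZMod.val_add, ← pow_eq_pow_mod _ hg, pow_add]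
  let ψ : Multiplicative (ZMod 3 × ZMod 3 × ZMod 3) →* PresentedGroup rels :=
    { toFun := fun m => u ^ (m.toAdd.1.val) * v ^ (m.toAdd.2.1.val) * w ^ (m.toAdd.2.2.val)
      map_one' := by
        show u ^ 0 * v ^ 0 * w ^ 0 = 1
        rw [pow_zero, pow_zero, pow_zero, one_mul, one_mul]
      map_mul' := by
        intro x y
        show u ^ (x.toAdd.1 + y.toAdd.1).val * v ^ (x.toAdd.2.1 + y.toAdd.2.1).val *
            w ^ (x.toAdd.2.2 + y.toAdd.2.2).val = _
        rw [hpw u hu3, hpw v hv3, hpw w hw3]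
        exact stmt9_mul_mul _ _ _ _ _ _ }
  have hψφ : ψ.comp φ = MonoidHom.id _ := by
    apply PresentedGroup.ext
    intro i
    rw [MonoidHom.comp_apply, MonoidHom.id_apply]
    rw [show φ (PresentedGroup.of i) = fM i from PresentedGroup.toGroup.of hrels]
    fin_cases i
    · show u ^ 2 * v ^ 2 * w ^ 2 = a 0
      exact stmt9_uvw hr0 hc0
    · show u ^ 0 * v ^ 2 * w ^ 2 = a 1
      rw [pow_zero, one_mul]
      exact stmt9_vw hr0 hr1 hc0
    · show u ^ 2 * v ^ 0 * w ^ 2 = a 2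
      rw [pow_zero, mul_one]
      exact stmt9_uw hr2 hc0 hc2
    · show u ^ 2 * v ^ 2 * w ^ 0 = a 3
      rw [pow_zero, mul_one]
      exact stmt9_uv hr3 hc0 hc3
  have hφψ : φ.comp ψ = MonoidHom.id _ := by
    apply MonoidHom.ext
    intro m
    rw [MonoidHom.comp_apply, MonoidHom.id_apply]
    have h1 : ψ m = u ^ (m.toAdd.1.val) * v ^ (m.toAdd.2.1.val) * w ^ (m.toAdd.2.2.val) := rfl
    have hφu : φ u = Multiplicative.ofAdd ((1, 0, 0) : ZMod 3 × ZMod 3 × ZMod 3) := by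
      rw [hu, map_mul, map_inv,
        show φ (a 1) = fM 1 from PresentedGroup.toGroup.of hrels,
        show φ (a 0) = fM 0 from PresentedGroup.toGroup.of hrels]
      decide
    have hφv : φ v = Multiplicative.ofAdd ((0, 1, 0) : ZMod 3 × ZMod 3 × ZMod 3) := by
      rw [hv, map_mul, map_inv,
        show φ (a 2) = fM 2 from PresentedGroup.toGroup.of hrels,
        show φ (a 0) = fM 0 from PresentedGroup.toGroup.of hrels]
      decide
    have hφw : φ w = Multiplicative.ofAdd ((0, 0, 1) : ZMod 3 × ZMod 3 × ZMod 3) := by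
      rw [hw, map_mul, map_inv,
        show φ (a 3) = fM 3 from PresentedGroup.toGroup.of hrels,
        show φ (a 0) = fM 0 from PresentedGroup.toGroup.of hrels]
      decide
    rw [h1, map_mul, map_mul, map_pow, map_pow, map_pow, hφu, hφv, hφw]
    have key : ∀ t : ZMod 3 × ZMod 3 × ZMod 3,
        (Multiplicative.ofAdd ((1, 0, 0) : ZMod 3 × ZMod 3 × ZMod 3)) ^ t.1.val *
        (Multiplicative.ofAdd ((0, 1, 0) : ZMod 3 × ZMod 3 × ZMod 3)) ^ t.2.1.val *
        (Multiplicative.ofAdd ((0, 0, 1) : ZMod 3 × ZMod 3 × ZMod 3)) ^ t.2.2.val =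
          Multiplicative.ofAdd t := by decide
    exact key m.toAdd
  exact ⟨MonoidHom.toMulEquiv φ ψ hψφ hφψ⟩
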